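/- Let U be a 2B×2B unitary matrix, fix x_0 ∈ ℝ^B, and set D(t) = e^{i(x_0 + tL)}. Let e^{iθ(t)} be an eigenvalue of the unitary matrix D(t)U, with θ(t) chosen real-analytic in t, and let u(t) be a corresponding normalized eigenvector depending analytically on t. Then dθ/dt = ⟨u(t), L u(t)⟩ = Σ_{j=1}^{B} L_j (|u_j(t)|² + |u_{j+B}(t)|²); in particular L_min ≤ dθ/dt ≤ L_max. -/

import Mathlib

open Matrix MeasureTheory Filter Real Topology

noncomputable section

/-- Index set for the `2B` directed bonds. -/
abbrev Idx (B : ℕ) := Fin B ⊕ Fin B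

/-- The diagonal matrix `e^{ix} = diag(e^{ix_1},…,e^{ix_B},e^{ix_1},…,e^{ix_B})`. -/
def expDiag {B : ℕ} (x : Fin B → ℝ) : Matrix (Idx B) (Idx B) ℂ :=
  Matrix.diagonal fun j => Complex.exp (Complex.I * ((Sum.elim x x j : ℝ) : ℂ))

/-- The diagonal matrix `L = diag(L_1,…,L_B,L_1,…,L_B)`. -/
def matL {B : ℕ} (L : Fin B → ℝ) : Matrix (Idx B) (Idx B) ℂ :=
  Matrix.diagonal fun j => ((Sum.elim L L j : ℝ) : ℂ)

/-- The point `x` (representative in `ℝ^B` of a point of the torus `𝕋^B`)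
lies on the surface `Σ = {x : det(e^{ix}S₀ − I) = 0}`. -/
def onSigma {B : ℕ} (S0 : Matrix (Idx B) (Idx B) ℂ) (x : Fin B → ℝ) : Prop :=
  (expDiag x * S0 - 1).det = 0

/-- Multiplicity of `1` as an eigenvalue of `e^{ix}S₀`. -/
def mult1 {B : ℕ} (S0 : Matrix (Idx B) (Idx B) ℂ) (x : Fin B → ℝ) : ℕ :=
  Module.finrank ℂ (LinearMap.ker (expDiag x * S0 - 1).mulVecLin)

/-- The linear flow `φ_t(x₀) = x₀ + tL` (on representatives in `ℝ^B`). -/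
def flow {B : ℕ} (L : Fin B → ℝ) (x0 : Fin B → ℝ) (t : ℝ) : Fin B → ℝ :=
  fun b => x0 b + t * L b

/-- Hermitian inner product on `ℂ^{2B}`. -/
def herm {B : ℕ} (v w : Idx B → ℂ) : ℂ := ∑ j, star (v j) * w j

/-- `lam` is the nondecreasing enumeration (with multiplicity) of the positive
solutions of `det(I − e^{iλL}S₀) = 0`, multiplicity of `λ` being the multiplicity
of `1` as an eigenvalue of `e^{iλL}S₀`. -/
def IsSpecEnum {B : ℕ} (S0 : Matrix (Idx B) (Idx B) ℂ) (L : Fin B → ℝ)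
    (lam : ℕ → ℝ) : Prop :=
  Monotone lam ∧ (∀ n, 0 < lam n) ∧ Tendsto lam atTop atTop ∧
    ∀ t : ℝ, 0 < t → Nat.card {n | lam n = t} = mult1 S0 (fun b => t * L b)

/-- `θ x` is the ordered (nonincreasing) list of eigenphases of `e^{ix}S₀`:
`0 < θ̂_{2B} ≤ … ≤ θ̂_1 ≤ 2π` (index `0` corresponds to `θ̂_1`), the eigenvalues of
`e^{ix}S₀` being exactly the `e^{iθ̂_j(x)}` with multiplicity. -/
def IsEigenphases {B : ℕ} (S0 : Matrix (Idx B) (Idx B) ℂ)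
    (θ : (Fin B → ℝ) → Fin (2*B) → ℝ) : Prop :=
  ∀ x : Fin B → ℝ,
    (∀ j k : Fin (2*B), j ≤ k → θ x k ≤ θ x j) ∧
    (∀ j, 0 < θ x j ∧ θ x j ≤ 2*π) ∧
    (expDiag x * S0).charpoly.roots
      = Multiset.map (fun j => Complex.exp (Complex.I * ((θ x j : ℝ) : ℂ))) Finset.univ.val

/-- The spacings `σ_j` of an ordered tuple of eigenphases:
`σ_j = θ̂_j − θ̂_{j+1}` and `σ_{2B} = θ̂_{2B} + 2π − θ̂_1`. -/
def spacing {n : ℕ} (θ : Fin n → ℝ) (j : Fin n) : ℝ :=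
  if h : (j : ℕ) + 1 < n then θ j - θ ⟨(j : ℕ) + 1, h⟩
  else θ j + 2*π - θ ⟨0, j.pos⟩

/-- The set `U ⊆ Σ` satisfies the shadow condition: its shadow along the flow
onto the hyperplane `{x_1 = 0}` has zero `(B−1)`-dimensional measure. -/
def ShadowNull {B : ℕ} (hB : 0 < B) (L : Fin B → ℝ) (U : Set (Fin B → ℝ)) : Prop :=
  volume {y : Fin B → ℝ | ∃ t ∈ Set.Ioc 0 (2*π / L ⟨0, hB⟩),
      (fun b => (if b = (⟨0, hB⟩ : Fin B) then 0 else y b) + t * L b) ∈ U} = 0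

/-- The `ε`-thickening `Φ_ε` of a function `Φ` defined on `Σ`. -/
def thick {B : ℕ} (S0 : Matrix (Idx B) (Idx B) ℂ) (L : Fin B → ℝ)
    (Phi : (Fin B → ℝ) → ℝ) (ε : ℝ) (x : Fin B → ℝ) : ℝ :=
  ∑' t : {t : ℝ // |t| ≤ ε/2 ∧ onSigma S0 (flow L x t)}, Phi (flow L x (t : ℝ))

/-- `tseq` enumerates the consecutive (positive) intersection times of the flow
`φ_t(x₀)` with the surface `Σ`. -/
def IsCrossingSeq {B : ℕ} (S0 : Matrix (Idx B) (Idx B) ℂ) (L : Fin B → ℝ)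
    (x0 : Fin B → ℝ) (tseq : ℕ → ℝ) : Prop :=
  StrictMono tseq ∧ (∀ n, 0 < tseq n) ∧ (∀ n, onSigma S0 (flow L x0 (tseq n))) ∧
    ∀ t, 0 < t → onSigma S0 (flow L x0 t) → ∃ n, tseq n = t

/-- The fundamental domain `[0,2π)^B` of the torus `𝕋^B`. -/
def fund (B : ℕ) : Set (Fin B → ℝ) := Set.univ.pi fun _ => Set.Ico (0:ℝ) (2*π)



lemma herm_mulVec_star {B : ℕ} (M : Matrix (Idx B) (Idx B) ℂ) (v w : Idx B → ℂ) :
    herm v (M.mulVec w) = herm ((star M).mulVec v) w := by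
  simp only [herm, Matrix.mulVec, dotProduct, Matrix.star_apply, Finset.mul_sum,
    Finset.sum_mul, star_sum, star_mul', star_star]
  rw [Finset.sum_comm]
  exact Finset.sum_congr rfl fun j _ => Finset.sum_congr rfl fun k _ => by ring

lemma herm_smul_left {B : ℕ} (c : ℂ) (v w : Idx B → ℂ) :
    herm (c • v) w = star c * herm v w := by
  simp [herm, Finset.mul_sum, star_mul', mul_assoc, mul_add]

lemma expDiag_unitary {B : ℕ} (x : Fin B → ℝ) : expDiag x ∈ Matrix.unitaryGroup (Idx B) ℂ := by
  have key : ∀ j : Idx B, (starRingEnd ℂ) (Complex.exp (Complex.I * ((Sum.elim x x j : ℝ):ℂ)))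
      * Complex.exp (Complex.I * ((Sum.elim x x j : ℝ):ℂ)) = 1 := by
    intro j
    rw [← Complex.exp_conj, ← Complex.exp_add, ← Complex.exp_zero]
    congr 1
    simp [Complex.conj_ofReal]
  constructor <;>
  · simp only [expDiag, Matrix.star_eq_conjTranspose, Matrix.diagonal_conjTranspose,
      Matrix.diagonal_mul_diagonal]
    ext i j
    rcases eq_or_ne i j with rfl|h
    · simpa [Matrix.diagonal_apply_eq, Matrix.one_apply_eq, mul_comm] using key i
    · simp [Matrix.diagonal_apply_ne _ h, Matrix.one_apply_ne h]

lemma diag_mul_mulVec_apply {B : ℕ} (d : Idx B → ℂ) (U : Matrix (Idx B) (Idx B) ℂ)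
    (v : Idx B → ℂ) (j : Idx B) :
    ((Matrix.diagonal d * U).mulVec v) j = d j * ∑ k, U j k * v k := by
  rw [← Matrix.mulVec_mulVec, Matrix.mulVec_diagonal]
  simp [Matrix.mulVec, dotProduct]

/-- (Lemma `lem:main`.)  If `e^{iθ(t)}` is an eigenvalue of the
unitary matrix `D(t)U = e^{i(x₀+tL)}U`, with `θ` real-analytic and `u(t)` a
corresponding analytically chosen normalized eigenvector, then
`dθ/dt = ⟨u(t), L u(t)⟩ = Σ_j L_j(|u_j|² + |u_{j+B}|²)`; in particular
`L_min ≤ dθ/dt ≤ L_max`. -/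
theorem eigenphase_derivative {B : ℕ} (hB : 0 < B)
    (L : Fin B → ℝ) (hL : ∀ b, 0 < L b)
    (Lmin Lmax : ℝ) (hmin : IsLeast (Set.range L) Lmin)
    (hmax : IsGreatest (Set.range L) Lmax)
    (U : Matrix (Idx B) (Idx B) ℂ) (hU : U ∈ Matrix.unitaryGroup (Idx B) ℂ)
    (x0 : Fin B → ℝ) (θ : ℝ → ℝ) (u : ℝ → Idx B → ℂ)
    (hθa : ∀ t, AnalyticAt ℝ θ t) (hua : ∀ t j, AnalyticAt ℝ (fun s => u s j) t)
    (heig : ∀ t, (expDiag (fun b => x0 b + t * L b) * U).mulVec (u t)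
        = Complex.exp (Complex.I * (θ t : ℂ)) • u t)
    (hnorm : ∀ t, herm (u t) (u t) = 1) :
    ∀ t : ℝ,
      (((deriv θ t : ℝ) : ℂ) = herm (u t) ((matL L).mulVec (u t)) ∧
        deriv θ t = ∑ j : Fin B, L j *
          (‖u t (Sum.inl j)‖^2 + ‖u t (Sum.inr j)‖^2)) ∧
      Lmin ≤ deriv θ t ∧ deriv θ t ≤ Lmax := by
  intro t₀
  set Lc : Idx B → ℝ := Sum.elim L L with hLc
  set xj : Idx B → ℝ := Sum.elim x0 x0 with hxj
  -- elim of flow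
  have hflow : ∀ (t : ℝ) (j : Idx B),
      Sum.elim (fun b => x0 b + t * L b) (fun b => x0 b + t * L b) j = xj j + t * Lc j := by
    intro t j; cases j <;> rfl
  set lam : ℝ → ℂ := fun t => Complex.exp (Complex.I * (θ t : ℂ)) with hlam
  -- componentwise eigen equation
  have hcomp : ∀ (t : ℝ) (j : Idx B),
      Complex.exp (Complex.I * ((xj j + t * Lc j : ℝ) : ℂ)) * (∑ k, U j k * u t k)
        = lam t * u t j := by
    intro t j
    have := congrFun (heig t) j
    rw [expDiag, diag_mul_mulVec_apply] at this
    rw [← hflow t j]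
    simpa using this
  -- derivatives
  set θ' : ℝ := deriv θ t₀ with hθ'def
  set u' : Idx B → ℂ := fun j => deriv (fun s => u s j) t₀ with hu'def
  have hθd : HasDerivAt θ θ' t₀ := (hθa t₀).differentiableAt.hasDerivAt
  have hud : ∀ j, HasDerivAt (fun s => u s j) (u' j) t₀ :=
    fun j => (hua t₀ j).differentiableAt.hasDerivAt
  set E : Idx B → ℂ := fun j => Complex.exp (Complex.I * ((xj j + t₀ * Lc j : ℝ) : ℂ)) with hE
  set S : Idx B → ℂ := fun j => ∑ k, U j k * u t₀ k with hS
  set S' : Idx B → ℂ := fun j => ∑ k, U j k * u' k with hS'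
  have eqj : ∀ j : Idx B,
      (E j * (Complex.I * (Lc j : ℂ))) * S j + E j * S' j
        = (lam t₀ * (Complex.I * (θ' : ℂ))) * u t₀ j + lam t₀ * u' j := by
    intro j
    have hr : HasDerivAt (fun t : ℝ => xj j + t * Lc j) (Lc j) t₀ := by
      simpa using ((hasDerivAt_id t₀).mul_const (Lc j)).const_add (xj j)
    have hEd : HasDerivAt (fun t : ℝ => Complex.exp (Complex.I * ((xj j + t * Lc j : ℝ) : ℂ)))
        (E j * (Complex.I * (Lc j : ℂ))) t₀ := by
      have := ((hr.ofReal_comp).const_mul Complex.I).cexp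
      simpa [hE, mul_comm, mul_left_comm, mul_assoc] using this
    have hSd : HasDerivAt (fun t => ∑ k, U j k * u t k) (S' j) t₀ :=
      HasDerivAt.fun_sum fun k _ => (hud k).const_mul (U j k)
    have hg := hEd.fun_mul hSd
    have hld : HasDerivAt lam (lam t₀ * (Complex.I * (θ' : ℂ))) t₀ := by
      have := ((hθd.ofReal_comp).const_mul Complex.I).cexp
      simpa [hlam, mul_comm, mul_left_comm, mul_assoc] using this
    have hh := hld.fun_mul (hud j)
    have hfun : (fun t => Complex.exp (Complex.I * ((xj j + t * Lc j : ℝ) : ℂ))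
        * (∑ k, U j k * u t k)) = fun t => lam t * u t j := funext fun t => hcomp t j
    have := hg.unique (hfun ▸ hh)
    rw [this]
  -- matrix A at time t₀
  set A : Matrix (Idx B) (Idx B) ℂ := expDiag (fun b => x0 b + t₀ * L b) * U with hA
  have hAapp : ∀ (v : Idx B → ℂ) (j : Idx B), (A.mulVec v) j = E j * ∑ k, U j k * v k := by
    intro v j
    rw [hA, expDiag, diag_mul_mulVec_apply]
    congr 1
    rw [hflow t₀ j]
  have hAU : A ∈ Matrix.unitaryGroup (Idx B) ℂ := mul_mem (expDiag_unitary _) hU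
  have hmod : (starRingEnd ℂ) (lam t₀) * lam t₀ = 1 := by
    rw [hlam, ← Complex.exp_conj, ← Complex.exp_add, ← Complex.exp_zero]
    congr 1
    simp [Complex.conj_ofReal]
  -- adjoint eigenvector
  have hAstar : (star A).mulVec (u t₀) = (starRingEnd ℂ) (lam t₀) • u t₀ := by
    have h1 : (star A).mulVec (A.mulVec (u t₀)) = u t₀ := by
      rw [Matrix.mulVec_mulVec, hAU.1, Matrix.one_mulVec]
    rw [heig t₀, Matrix.mulVec_smul] at h1
    calc (star A).mulVec (u t₀)
        = ((starRingEnd ℂ) (lam t₀) * lam t₀) • (star A).mulVec (u t₀) := by rw [hmod, one_smul]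
      _ = (starRingEnd ℂ) (lam t₀) • (lam t₀ • (star A).mulVec (u t₀)) := by
          rw [mul_smul]
      _ = (starRingEnd ℂ) (lam t₀) • u t₀ := by rw [h1]
  -- summation
  have hsum : ∑ j, star (u t₀ j) * ((E j * (Complex.I * (Lc j : ℂ))) * S j + E j * S' j)
      = ∑ j, star (u t₀ j) * ((lam t₀ * (Complex.I * (θ' : ℂ))) * u t₀ j + lam t₀ * u' j) :=
    Finset.sum_congr rfl fun j _ => by rw [eqj j]
  have hLHS : ∑ j, star (u t₀ j) * ((E j * (Complex.I * (Lc j : ℂ))) * S j + E j * S' j)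
      = Complex.I * lam t₀ * (∑ j, (Lc j : ℂ) * (star (u t₀ j) * u t₀ j))
        + herm (u t₀) (A.mulVec u') := by
    rw [herm, Finset.mul_sum, ← Finset.sum_add_distrib]
    refine Finset.sum_congr rfl fun j _ => ?_
    have hA'u : (A.mulVec u') j = E j * S' j := hAapp u' j
    rw [hA'u]
    have hes : E j * S j = lam t₀ * u t₀ j := hcomp t₀ j
    linear_combination (Complex.I * (Lc j : ℂ) * star (u t₀ j)) * hes
  have hRHS : ∑ j, star (u t₀ j) * ((lam t₀ * (Complex.I * (θ' : ℂ))) * u t₀ j + lam t₀ * u' j)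
      = lam t₀ * (Complex.I * (θ' : ℂ)) * herm (u t₀) (u t₀) + lam t₀ * herm (u t₀) u' := by
    rw [herm, herm, Finset.mul_sum, Finset.mul_sum, ← Finset.sum_add_distrib]
    exact Finset.sum_congr rfl fun j _ => by ring
  have hT : herm (u t₀) (A.mulVec u') = lam t₀ * herm (u t₀) u' := by
    rw [herm_mulVec_star, hAstar, herm_smul_left]
    congr 1
    exact Complex.conj_conj _
  rw [hLHS, hRHS, hT, hnorm t₀, mul_one] at hsum
  have hcancel : Complex.I * lam t₀ * (∑ j, (Lc j : ℂ) * (star (u t₀ j) * u t₀ j))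
      = Complex.I * lam t₀ * (θ' : ℂ) := by linear_combination hsum
  have hInz : Complex.I * lam t₀ ≠ 0 := mul_ne_zero Complex.I_ne_zero (Complex.exp_ne_zero _)
  have hmain : ((θ' : ℝ) : ℂ) = ∑ j, (Lc j : ℂ) * (star (u t₀ j) * u t₀ j) :=
    (mul_left_cancel₀ hInz hcancel).symm
  -- rewrite star z * z as normSq
  have hterm : ∀ j, (Lc j : ℂ) * (star (u t₀ j) * u t₀ j)
      = ((Lc j * Complex.normSq (u t₀ j) : ℝ) : ℂ) := by
    intro j
    rw [Complex.star_def, ← Complex.normSq_eq_conj_mul_self]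
    push_cast
    ring
  have hmainR : θ' = ∑ j, Lc j * Complex.normSq (u t₀ j) := by
    have : ((θ' : ℝ) : ℂ) = ((∑ j, Lc j * Complex.normSq (u t₀ j) : ℝ) : ℂ) := by
      rw [hmain, Finset.sum_congr rfl fun j _ => hterm j]
      push_cast
      rfl
    exact_mod_cast this
  -- norm
  have hnsq1 : ∑ j, Complex.normSq (u t₀ j) = 1 := by
    have h1 : ((∑ j, Complex.normSq (u t₀ j) : ℝ) : ℂ) = ((1:ℝ) : ℂ) := by
      push_cast
      rw [← hnorm t₀, herm]
      exact Finset.sum_congr rfl fun j _ => by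
        rw [Complex.star_def, ← Complex.normSq_eq_conj_mul_self]
    exact_mod_cast h1
  have hLcmin : ∀ j : Idx B, Lmin ≤ Lc j := by
    intro j; cases j with
    | inl b => exact hmin.2 ⟨b, rfl⟩
    | inr b => exact hmin.2 ⟨b, rfl⟩
  have hLcmax : ∀ j : Idx B, Lc j ≤ Lmax := by
    intro j; cases j with
    | inl b => exact hmax.2 ⟨b, rfl⟩
    | inr b => exact hmax.2 ⟨b, rfl⟩
  refine ⟨⟨?_, ?_⟩, ?_, ?_⟩
  · -- herm identity
    rw [hmain, herm]
    refine Finset.sum_congr rfl fun j _ => ?_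
    rw [matL, Matrix.mulVec_diagonal]
    ring
  · rw [hmainR, Fintype.sum_sum_type]
    rw [← Finset.sum_add_distrib]
    refine Finset.sum_congr rfl fun j _ => ?_
    simp [Complex.sq_norm, hLc, mul_add]
  · rw [hmainR]
    calc Lmin = Lmin * ∑ j, Complex.normSq (u t₀ j) := by rw [hnsq1, mul_one]
      _ = ∑ j, Lmin * Complex.normSq (u t₀ j) := Finset.mul_sum _ _ _
      _ ≤ ∑ j, Lc j * Complex.normSq (u t₀ j) :=
          Finset.sum_le_sum fun j _ =>
            mul_le_mul_of_nonneg_right (hLcmin j) (Complex.normSq_nonneg _)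
  · rw [hmainR]
    calc ∑ j, Lc j * Complex.normSq (u t₀ j)
        ≤ ∑ j, Lmax * Complex.normSq (u t₀ j) :=
          Finset.sum_le_sum fun j _ =>
            mul_le_mul_of_nonneg_right (hLcmax j) (Complex.normSq_nonneg _)
      _ = Lmax * ∑ j, Complex.normSq (u t₀ j) := (Finset.mul_sum _ _ _).symm
      _ = Lmax := by rw [hnsq1, mul_one]
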